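/- Let S be a finite nonempty type, P : S → PMF S a Markov chain transition function, (μ_s)_{s∈S} a trajectory measure family for (S, P), and Acc a finite set of pairs (E, F) of subsets of S. Then for every s ∈ S, for μ_s-almost every trajectory ω : ℕ → S, the Rabin condition holds for ω (there exists (E, F) ∈ Acc such that {n | ω n ∈ E} is finite and {n | ω n ∈ F} is infinite) if and only if there exists n such that the SCC of ω n is terminal and there exists (E, F) ∈ Acc with SCC(ω n) ∩ E = ∅ and SCC(ω n) ∩ F ≠ ∅. -/

import Mathlib

open scoped ENNReal

/-- A trajectory measure family for a Markov chain with transition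
probabilities `P` (values in `ℝ≥0∞`). -/
def IsTrajectoryMeasureFamily {X : Type*} [MeasurableSpace X] [DecidableEq X]
    (P : X → X → ℝ≥0∞) (μ : X → MeasureTheory.Measure (ℕ → X)) : Prop :=
  ∀ x : X, MeasureTheory.IsProbabilityMeasure (μ x) ∧
    ∀ (n : ℕ) (f : ℕ → X),
      μ x {ω | ∀ k ≤ n, ω k = f k} =
        if f 0 = x then ∏ k ∈ Finset.range n, P (f k) (f (k + 1)) else 0

/-- The strongly connected component of a vertex `v`. -/
def SCC {V : Type*} (E : V → V → Prop) (v : V) : Set V :=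
  {w | Relation.ReflTransGen E v w ∧ Relation.ReflTransGen E w v}


open MeasureTheory
open scoped Classical
set_option linter.unusedSectionVars false

namespace RabinAux

variable {S : Type*} [Fintype S] [DecidableEq S] [MeasurableSpace S]
  [MeasurableSingletonClass S]

/-- Cylinder set determined by the first `n+1` coordinates. -/
def Cyl (f : ℕ → S) (n : ℕ) : Set (ℕ → S) := {ω | ∀ k ≤ n, ω k = f k}

lemma measurableSet_cyl (f : ℕ → S) (n : ℕ) : MeasurableSet (Cyl f n) := by
  have : Cyl f n = ⋂ k, ⋂ (_ : k ≤ n), (fun ω : ℕ → S => ω k) ⁻¹' {f k} := by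
    ext ω; simp [Cyl]
  rw [this]
  exact MeasurableSet.iInter fun k => MeasurableSet.iInter fun _ =>
    (measurable_pi_apply k) (measurableSet_singleton (f k))

/-- Extend a word of length `t+1` to an infinite word. -/
def extw (t : ℕ) (w : Fin (t + 1) → S) : ℕ → S := fun k => w ⟨min k t, by omega⟩

lemma extw_eq {t k : ℕ} (hk : k ≤ t) (w : Fin (t + 1) → S) :
    extw t w k = w ⟨k, by omega⟩ := by
  simp [extw, Nat.min_eq_left hk]

lemma mem_cyl_extw (t : ℕ) (ω : ℕ → S) :
    ω ∈ Cyl (extw t (fun i => ω i)) t := by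
  intro k hk; rw [extw_eq hk]

lemma cyl_extw_disjoint (t : ℕ) :
    Pairwise (Function.onFun Disjoint fun w : Fin (t + 1) → S => Cyl (extw t w) t) := by
  intro w w' hne
  rw [Function.onFun, Set.disjoint_left]
  intro ω h1 h2
  apply hne
  funext i
  have e1 := h1 i.1 (by omega)
  have e2 := h2 i.1 (by omega)
  rw [extw_eq (by omega : i.1 ≤ t)] at e1 e2
  simp only [Fin.eta] at e1 e2
  rw [← e1, ← e2]

/-- Decompose the measure of a measurable set along cylinders of length `t+1`. -/
lemma measure_eq_tsum_cyl (ν : Measure (ℕ → S)) {A : Set (ℕ → S)}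
    (hA : MeasurableSet A) (t : ℕ) :
    ν A = ∑' w : Fin (t + 1) → S, ν (A ∩ Cyl (extw t w) t) := by
  have hcov : A = ⋃ w : Fin (t + 1) → S, A ∩ Cyl (extw t w) t := by
    ext ω
    constructor
    · intro hω
      exact Set.mem_iUnion.2 ⟨fun i => ω i, hω, mem_cyl_extw t ω⟩
    · rintro hω
      obtain ⟨w, hw, -⟩ := Set.mem_iUnion.1 hω
      exact hw
  nth_rewrite 1 [hcov]
  exact measure_iUnion
    (fun w w' hne => ((cyl_extw_disjoint t hne).mono
      Set.inter_subset_right Set.inter_subset_right))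
    (fun w => hA.inter (measurableSet_cyl _ t))

/-- A set determined by coordinates `0..t`. -/
def Det (t : ℕ) (A : Set (ℕ → S)) : Prop :=
  ∀ ω ω' : ℕ → S, (∀ k ≤ t, ω k = ω' k) → ω ∈ A → ω' ∈ A

lemma Det.inter_cyl {t : ℕ} {A : Set (ℕ → S)} (hA : Det t A)
    (w : Fin (t + 1) → S) :
    A ∩ Cyl (extw t w) t = if extw t w ∈ A then Cyl (extw t w) t else ∅ := by
  split_ifs with h
  · refine Set.eq_of_subset_of_subset Set.inter_subset_right fun ω hω => ⟨?_, hω⟩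
    exact hA _ _ (fun k hk => (hω k hk).symm) h
  · ext ω
    simp only [Set.mem_inter_iff, Set.mem_empty_iff_false, iff_false]
    rintro ⟨h1, h2⟩
    exact h (hA _ _ (fun k hk => h2 k hk) h1)

lemma Det.measurableSet {t : ℕ} {A : Set (ℕ → S)} (hA : Det t A) :
    MeasurableSet A := by
  classical
  have hcov : A = ⋃ w : Fin (t + 1) → S,
      if extw t w ∈ A then Cyl (extw t w) t else ∅ := by
    ext ω
    constructor
    · intro hω
      refine Set.mem_iUnion.2 ⟨fun i => ω i, ?_⟩
      have hmem : extw t (fun i => ω i) ∈ A :=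
        hA _ _ (fun k hk => by rw [extw_eq hk]) hω
      rw [if_pos hmem]
      exact mem_cyl_extw t ω
    · intro hω
      obtain ⟨w, hw⟩ := Set.mem_iUnion.1 hω
      by_cases h : extw t w ∈ A
      · rw [if_pos h] at hw
        exact hA _ _ (fun k hk => (hw k hk).symm) h
      · rw [if_neg h] at hw; exact absurd hw (Set.notMem_empty ω)
  rw [hcov]
  refine MeasurableSet.iUnion fun w => ?_
  split_ifs
  · exact measurableSet_cyl _ t
  · exact MeasurableSet.empty


section Chain

variable (P : S → S → ℝ≥0∞) {μ : S → MeasureTheory.Measure (ℕ → S)}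
  (hμ : IsTrajectoryMeasureFamily P μ) (s : S)

/-- The event that `y` is not visited during the `L` steps after time `t`. -/
def WFset (y : S) (L t : ℕ) : Set (ℕ → S) :=
  {ω | ∀ j, 1 ≤ j → j ≤ L → ω (t + j) ≠ y}

lemma measurableSet_WFset (y : S) (L t : ℕ) : MeasurableSet (WFset y L t) := by
  have : WFset y L t = ⋂ j, ⋂ (_ : 1 ≤ j), ⋂ (_ : j ≤ L),
      ((fun ω : ℕ → S => ω (t + j)) ⁻¹' {y})ᶜ := by
    ext ω; simp [WFset]
  rw [this]
  exact MeasurableSet.iInter fun j => MeasurableSet.iInter fun _ =>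
    MeasurableSet.iInter fun _ =>
      ((measurable_pi_apply (t + j)) (measurableSet_singleton y)).compl

include hμ

lemma cyl_measure (f : ℕ → S) (n : ℕ) :
    μ s (Cyl f n) =
      if f 0 = s then ∏ k ∈ Finset.range n, P (f k) (f (k + 1)) else 0 :=
  (hμ s).2 n f

lemma cyl_window_bound (x y : S) (σ : ℕ → S) (L : ℕ) (hL : 1 ≤ L)
    (hσ0 : σ 0 = x) (hσL : σ L = y) (f : ℕ → S) (t : ℕ) (hf : f t = x) :
    μ s (Cyl f t ∩ WFset y L t) ≤
      (1 - ∏ j ∈ Finset.range L, P (σ j) (σ (j + 1))) * μ s (Cyl f t) := by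
  haveI : MeasureTheory.IsProbabilityMeasure (μ s) := (hμ s).1
  set p : ℝ≥0∞ := ∏ j ∈ Finset.range L, P (σ j) (σ (j + 1)) with hp
  set h : ℕ → S := fun k => if k ≤ t then f k else σ (k - t) with hh
  have hht : ∀ j ≤ L, h (t + j) = σ j := by
    intro j hj
    by_cases hj0 : j = 0
    · subst hj0; simp [hh, hf, hσ0]
    · have h1 : ¬ (t + j ≤ t) := by omega
      have h2 : t + j - t = j := by omega
      simp [hh, h1, h2]
  have hExt_sub : Cyl h (t + L) ⊆ Cyl f t := by
    intro ω hω k hk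
    rw [hω k (by omega)]
    simp [hh, hk]
  have hsub : Cyl f t ∩ WFset y L t ⊆ Cyl f t \ Cyl h (t + L) := by
    rintro ω ⟨h1, h2⟩
    refine ⟨h1, fun hc => ?_⟩
    have := hc (t + L) le_rfl
    rw [hht L le_rfl, hσL] at this
    exact h2 L hL le_rfl this
  have hExt_meas : μ s (Cyl h (t + L)) = p * μ s (Cyl f t) := by
    rw [cyl_measure P hμ s, cyl_measure P hμ s]
    have h0 : h 0 = f 0 := by simp [hh]
    by_cases hs : f 0 = s
    · rw [if_pos (by rw [h0]; exact hs), if_pos hs, Finset.prod_range_add]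
      have e1 : ∏ k ∈ Finset.range t, P (h k) (h (k + 1)) =
          ∏ k ∈ Finset.range t, P (f k) (f (k + 1)) := by
        refine Finset.prod_congr rfl fun k hk => ?_
        have hk' : k < t := Finset.mem_range.1 hk
        simp [hh, Nat.le_of_lt hk', hk']
      have e2 : ∏ j ∈ Finset.range L, P (h (t + j)) (h (t + j + 1)) = p := by
        refine Finset.prod_congr rfl fun j hj => ?_
        have hj' : j < L := Finset.mem_range.1 hj
        rw [hht j (by omega), show t + j + 1 = t + (j + 1) by omega,
          hht (j + 1) (by omega)]
      rw [e1, e2, mul_comm]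
    · rw [if_neg (by rw [h0]; exact hs), if_neg hs, mul_zero]
  calc μ s (Cyl f t ∩ WFset y L t)
      ≤ μ s (Cyl f t \ Cyl h (t + L)) := measure_mono hsub
    _ = μ s (Cyl f t) - μ s (Cyl h (t + L)) :=
        MeasureTheory.measure_diff hExt_sub
          (measurableSet_cyl h (t + L)).nullMeasurableSet
          (MeasureTheory.measure_ne_top _ _)
    _ = 1 * μ s (Cyl f t) - p * μ s (Cyl f t) := by rw [hExt_meas, one_mul]
    _ = (1 - p) * μ s (Cyl f t) := by
        rw [ENNReal.sub_mul fun _ _ => MeasureTheory.measure_ne_top _ _]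

lemma det_window_bound (x y : S) (σ : ℕ → S) (L : ℕ) (hL : 1 ≤ L)
    (hσ0 : σ 0 = x) (hσL : σ L = y) {A : Set (ℕ → S)} {t : ℕ}
    (hA : Det t A) (hx : ∀ ω ∈ A, ω t = x) :
    μ s (A ∩ WFset y L t) ≤
      (1 - ∏ j ∈ Finset.range L, P (σ j) (σ (j + 1))) * μ s A := by
  set p : ℝ≥0∞ := ∏ j ∈ Finset.range L, P (σ j) (σ (j + 1)) with hp
  rw [measure_eq_tsum_cyl (μ s) (hA.measurableSet.inter (measurableSet_WFset y L t)) t,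
    measure_eq_tsum_cyl (μ s) hA.measurableSet t, ← ENNReal.tsum_mul_left]
  refine ENNReal.tsum_le_tsum fun w => ?_
  have hre : A ∩ WFset y L t ∩ Cyl (extw t w) t =
      (A ∩ Cyl (extw t w) t) ∩ WFset y L t := by
    rw [Set.inter_right_comm]
  rw [hre, hA.inter_cyl w]
  by_cases hmem : extw t w ∈ A
  · rw [if_pos hmem]
    exact cyl_window_bound P hμ s x y σ L hL hσ0 hσL _ t (hx _ hmem)
  · rw [if_neg hmem]
    simp


end Chain

section Greedy

variable (P : S → S → ℝ≥0∞) {μ : S → MeasureTheory.Measure (ℕ → S)}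
  (hμ : IsTrajectoryMeasureFamily P μ) (s x y : S) (N L : ℕ)

/-- `Qset x y N L k t`: the `(k+1)`-st greedy mark (visit to `x`, marks starting
at time `N` and separated by at least `L`) occurs at time `t`, and the windows
after the first `k` marks avoid `y`. -/
def Qset (x y : S) (N L : ℕ) : ℕ → ℕ → Set (ℕ → S)
  | 0, t => {ω | N ≤ t ∧ ω t = x ∧ ∀ u, N ≤ u → u < t → ω u ≠ x}
  | (k + 1), t => ⋃ t' : ℕ, {ω | ω ∈ Qset x y N L k t' ∧ ω ∈ WFset y L t' ∧
      t' + L ≤ t ∧ ω t = x ∧ ∀ u, t' + L ≤ u → u < t → ω u ≠ x}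

def Piece (x y : S) (N L k t' t : ℕ) : Set (ℕ → S) :=
  {ω | ω ∈ Qset x y N L k t' ∧ ω ∈ WFset y L t' ∧
      t' + L ≤ t ∧ ω t = x ∧ ∀ u, t' + L ≤ u → u < t → ω u ≠ x}

lemma Qset_succ (k t : ℕ) :
    Qset x y N L (k + 1) t = ⋃ t' : ℕ, Piece x y N L k t' t := rfl

lemma Qset_x : ∀ {k t : ℕ} {ω : ℕ → S}, ω ∈ Qset x y N L k t → ω t = x := by
  intro k t ω h
  cases k with
  | zero => exact h.2.1
  | succ k =>
    obtain ⟨t', h1⟩ := Set.mem_iUnion.1 h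
    exact h1.2.2.2.1

lemma Qset_det : ∀ (k t : ℕ), Det t (Qset x y N L k t) := by
  intro k
  induction k with
  | zero =>
    intro t ω ω' hagree h
    refine ⟨h.1, by rw [← hagree t le_rfl]; exact h.2.1,
      fun u hu hut => by rw [← hagree u (by omega)]; exact h.2.2 u hu hut⟩
  | succ k ih =>
    intro t ω ω' hagree h
    obtain ⟨t', h1, h2, h3, h4, h5⟩ := Set.mem_iUnion.1 h
    refine Set.mem_iUnion.2 ⟨t', ih t' ω ω' (fun u hu => hagree u (by omega)) h1,
      fun j hj1 hj2 => by rw [← hagree (t' + j) (by omega)]; exact h2 j hj1 hj2,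
      h3, by rw [← hagree t le_rfl]; exact h4,
      fun u hu hut => by rw [← hagree u (by omega)]; exact h5 u hu hut⟩

lemma Piece_det (k t' t : ℕ) : Det t (Piece x y N L k t' t) := by
  rintro ω ω' hagree ⟨h1, h2, h3, h4, h5⟩
  refine ⟨Qset_det x y N L k t' ω ω' (fun u hu => hagree u (by omega)) h1,
    fun j hj1 hj2 => by rw [← hagree (t' + j) (by omega)]; exact h2 j hj1 hj2,
    h3, by rw [← hagree t le_rfl]; exact h4,
    fun u hu hut => by rw [← hagree u (by omega)]; exact h5 u hu hut⟩

lemma disj_aux {A : ℕ → Set (ℕ → S)}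
    (h : ∀ t1 t2, t1 < t2 → ∀ ω, ω ∈ A t1 → ω ∈ A t2 → False) :
    Pairwise (Function.onFun Disjoint A) := by
  intro t1 t2 hne
  rcases hne.lt_or_gt with h12 | h21
  · exact Set.disjoint_left.2 fun ω ha hb => h _ _ h12 ω ha hb
  · exact Set.disjoint_left.2 fun ω ha hb => h _ _ h21 ω hb ha

lemma Qset_zero_disj : Pairwise (Function.onFun Disjoint fun t => Qset x y N L 0 t) := by
  refine disj_aux fun t1 t2 h12 ω h1 h2 => ?_
  exact h2.2.2 t1 h1.1 h12 h1.2.1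

lemma Piece_disj (k t' : ℕ) :
    Pairwise (Function.onFun Disjoint fun t => Piece x y N L k t' t) := by
  refine disj_aux fun t1 t2 h12 ω h1 h2 => ?_
  exact h2.2.2.2.2 t1 h1.2.2.1 h12 h1.2.2.2.1

/-- The quantity driving the geometric decay. -/
noncomputable def Phi (μ : S → MeasureTheory.Measure (ℕ → S)) (s x y : S)
    (N L : ℕ) (k : ℕ) : ℝ≥0∞ :=
  ∑' t : ℕ, μ s (Qset x y N L k t ∩ WFset y L t)

variable (σ : ℕ → S)

include hμ

lemma Phi_succ_le (hL : 1 ≤ L) (hσ0 : σ 0 = x) (hσL : σ L = y) (k : ℕ) :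
    Phi μ s x y N L (k + 1) ≤
      (1 - ∏ j ∈ Finset.range L, P (σ j) (σ (j + 1))) * Phi μ s x y N L k := by
  set p : ℝ≥0∞ := ∏ j ∈ Finset.range L, P (σ j) (σ (j + 1)) with hp
  have step1 : ∀ t, μ s (Qset x y N L (k + 1) t ∩ WFset y L t) ≤
      (1 - p) * μ s (Qset x y N L (k + 1) t) := fun t =>
    det_window_bound P hμ s x y σ L hL hσ0 hσL (Qset_det x y N L (k + 1) t)
      (fun ω hω => Qset_x x y N L hω)
  calc Phi μ s x y N L (k + 1)
      ≤ ∑' t : ℕ, (1 - p) * μ s (Qset x y N L (k + 1) t) :=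
        ENNReal.tsum_le_tsum step1
    _ = (1 - p) * ∑' t : ℕ, μ s (Qset x y N L (k + 1) t) := ENNReal.tsum_mul_left
    _ ≤ (1 - p) * Phi μ s x y N L k := by
        refine mul_le_mul_right ?_ _
        calc ∑' t : ℕ, μ s (Qset x y N L (k + 1) t)
            ≤ ∑' t : ℕ, ∑' t' : ℕ, μ s (Piece x y N L k t' t) := by
              refine ENNReal.tsum_le_tsum fun t => ?_
              rw [Qset_succ]
              exact MeasureTheory.measure_iUnion_le _
          _ = ∑' t' : ℕ, ∑' t : ℕ, μ s (Piece x y N L k t' t) := ENNReal.tsum_comm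
          _ = ∑' t' : ℕ, μ s (⋃ t : ℕ, Piece x y N L k t' t) := by
              refine tsum_congr fun t' => ?_
              exact (MeasureTheory.measure_iUnion (Piece_disj x y N L k t')
                (fun t => (Piece_det x y N L k t' t).measurableSet)).symm
          _ ≤ Phi μ s x y N L k := by
              refine ENNReal.tsum_le_tsum fun t' => ?_
              refine MeasureTheory.measure_mono ?_
              rintro ω hω
              obtain ⟨t, h1, h2, -⟩ := Set.mem_iUnion.1 hω
              exact ⟨h1, h2⟩

lemma Phi_zero_le (hL : 1 ≤ L) (hσ0 : σ 0 = x) (hσL : σ L = y) :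
    Phi μ s x y N L 0 ≤ 1 - ∏ j ∈ Finset.range L, P (σ j) (σ (j + 1)) := by
  haveI : MeasureTheory.IsProbabilityMeasure (μ s) := (hμ s).1
  set p : ℝ≥0∞ := ∏ j ∈ Finset.range L, P (σ j) (σ (j + 1)) with hp
  have step1 : ∀ t, μ s (Qset x y N L 0 t ∩ WFset y L t) ≤
      (1 - p) * μ s (Qset x y N L 0 t) := fun t =>
    det_window_bound P hμ s x y σ L hL hσ0 hσL (Qset_det x y N L 0 t)
      (fun ω hω => Qset_x x y N L hω)
  calc Phi μ s x y N L 0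
      ≤ ∑' t : ℕ, (1 - p) * μ s (Qset x y N L 0 t) := ENNReal.tsum_le_tsum step1
    _ = (1 - p) * ∑' t : ℕ, μ s (Qset x y N L 0 t) := ENNReal.tsum_mul_left
    _ ≤ (1 - p) * 1 := by
        refine mul_le_mul_right ?_ _
        rw [← MeasureTheory.measure_iUnion (Qset_zero_disj x y N L)
          (fun t => (Qset_det x y N L 0 t).measurableSet)]
        exact MeasureTheory.prob_le_one
    _ = 1 - p := mul_one _

lemma Phi_le (hL : 1 ≤ L) (hσ0 : σ 0 = x) (hσL : σ L = y) (k : ℕ) :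
    Phi μ s x y N L k ≤
      (1 - ∏ j ∈ Finset.range L, P (σ j) (σ (j + 1))) ^ (k + 1) := by
  induction k with
  | zero => rw [pow_one]; exact Phi_zero_le P hμ s x y N L σ hL hσ0 hσL
  | succ k ih =>
    calc Phi μ s x y N L (k + 1)
        ≤ (1 - ∏ j ∈ Finset.range L, P (σ j) (σ (j + 1))) * Phi μ s x y N L k :=
          Phi_succ_le P hμ s x y N L σ hL hσ0 hσL k
      _ ≤ (1 - ∏ j ∈ Finset.range L, P (σ j) (σ (j + 1))) *
            (1 - ∏ j ∈ Finset.range L, P (σ j) (σ (j + 1))) ^ (k + 1) :=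
          mul_le_mul_right ih _
      _ = (1 - ∏ j ∈ Finset.range L, P (σ j) (σ (j + 1))) ^ (k + 1 + 1) := by
          rw [← pow_succ']

omit hμ in
lemma badN_subset (k : ℕ) :
    {ω : ℕ → S | {n : ℕ | ω n = x}.Infinite ∧ ∀ m, N ≤ m → ω m ≠ y} ⊆
      ⋃ t : ℕ, (Qset x y N L k t ∩ WFset y L t) := by
  rintro ω ⟨hinf, hy⟩
  have helper : ∀ M : ℕ, ∃ t, M ≤ t ∧ ω t = x ∧ ∀ u, M ≤ u → u < t → ω u ≠ x := by
    intro M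
    have hex : ∃ n, M ≤ n ∧ ω n = x := by
      by_contra hc
      push_neg at hc
      refine hinf ((Set.finite_Iio M).subset fun n hn => ?_)
      by_contra hnM
      exact hc n (by simpa using hnM) hn
    refine ⟨Nat.find hex, (Nat.find_spec hex).1, (Nat.find_spec hex).2,
      fun u hu hut hx => ?_⟩
    exact Nat.find_min hex hut ⟨hu, hx⟩
  have key : ∀ k, ∃ t, N ≤ t ∧ ω ∈ Qset x y N L k t := by
    intro k
    induction k with
    | zero =>
      obtain ⟨t, h1, h2, h3⟩ := helper N
      exact ⟨t, h1, h1, h2, h3⟩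
    | succ k ih =>
      obtain ⟨t', hNt', hQ⟩ := ih
      obtain ⟨t, h1, h2, h3⟩ := helper (t' + L)
      refine ⟨t, by omega, Set.mem_iUnion.2 ⟨t', hQ, ?_, h1, h2, h3⟩⟩
      intro j hj1 hj2
      exact hy (t' + j) (by omega)
  obtain ⟨t, hNt, hQ⟩ := key k
  refine Set.mem_iUnion.2 ⟨t, hQ, fun j hj1 hj2 => hy (t + j) (by omega)⟩

lemma badN_null (hL : 1 ≤ L) (hσ0 : σ 0 = x) (hσL : σ L = y)
    (hpos : 0 < ∏ j ∈ Finset.range L, P (σ j) (σ (j + 1))) :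
    μ s {ω : ℕ → S | {n : ℕ | ω n = x}.Infinite ∧ ∀ m, N ≤ m → ω m ≠ y} = 0 := by
  set p : ℝ≥0∞ := ∏ j ∈ Finset.range L, P (σ j) (σ (j + 1)) with hp
  have h1p : (1 : ℝ≥0∞) - p < 1 :=
    ENNReal.sub_lt_self ENNReal.one_ne_top one_ne_zero (by exact hpos.ne')
  have hb : ∀ k : ℕ, μ s {ω : ℕ → S | {n : ℕ | ω n = x}.Infinite ∧
      ∀ m, N ≤ m → ω m ≠ y} ≤ (1 - p) ^ (k + 1) := by
    intro k
    calc μ s {ω : ℕ → S | {n : ℕ | ω n = x}.Infinite ∧ ∀ m, N ≤ m → ω m ≠ y}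
        ≤ μ s (⋃ t : ℕ, (Qset x y N L k t ∩ WFset y L t)) :=
          MeasureTheory.measure_mono (badN_subset x y N L k)
      _ ≤ Phi μ s x y N L k := MeasureTheory.measure_iUnion_le _
      _ ≤ (1 - p) ^ (k + 1) := Phi_le P hμ s x y N L σ hL hσ0 hσL k
  have htend : Filter.Tendsto (fun k : ℕ => (1 - p) ^ (k + 1)) Filter.atTop
      (nhds 0) := by
    have := ENNReal.tendsto_pow_atTop_nhds_zero_of_lt_one h1p
    exact this.comp (Filter.tendsto_add_atTop_nat 1)
  have := ge_of_tendsto htend (Filter.Eventually.of_forall hb)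
  exact le_antisymm this zero_le

end Greedy

section AE

variable (P : S → S → ℝ≥0∞) {μ : S → MeasureTheory.Measure (ℕ → S)}
  (hμ : IsTrajectoryMeasureFamily P μ) (s : S)

lemma exists_path {x y : S}
    (h : Relation.ReflTransGen (fun a b => 0 < P a b) x y) :
    ∃ (L : ℕ) (σ : ℕ → S), σ 0 = x ∧ σ L = y ∧
      ∀ j < L, 0 < P (σ j) (σ (j + 1)) := by
  induction h with
  | refl => exact ⟨0, fun _ => x, rfl, rfl, by omega⟩
  | @tail b c hxb hbc ih =>
    obtain ⟨L, σ, h0, hL, hstep⟩ := ih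
    refine ⟨L + 1, fun j => if j ≤ L then σ j else c, by simp [h0], by simp, ?_⟩
    intro j hj
    by_cases hjL : j < L
    · simpa [show j ≤ L by omega, show j + 1 ≤ L by omega] using hstep j hjL
    · have hjeq : j = L := by omega
      subst hjeq
      simpa [hL] using hbc

include hμ

lemma ae_edges : ∀ᵐ ω ∂ μ s, ∀ n : ℕ, 0 < P (ω n) (ω (n + 1)) := by
  rw [MeasureTheory.ae_all_iff]
  intro n
  rw [MeasureTheory.ae_iff]
  have hsub : {ω : ℕ → S | ¬ 0 < P (ω n) (ω (n + 1))} ⊆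
      ⋃ w : Fin (n + 2) → S,
        (Cyl (extw (n + 1) w) (n + 1) ∩
          {ω : ℕ → S | P (ω n) (ω (n + 1)) = 0}) := by
    intro ω hω
    simp only [Set.mem_setOf_eq, not_lt, nonpos_iff_eq_zero] at hω
    exact Set.mem_iUnion.2 ⟨fun i => ω i, mem_cyl_extw (n + 1) ω, hω⟩
  refine MeasureTheory.measure_mono_null hsub
    (MeasureTheory.measure_iUnion_null fun w => ?_)
  by_cases hz : P (extw (n + 1) w n) (extw (n + 1) w (n + 1)) = 0
  · refine MeasureTheory.measure_mono_null Set.inter_subset_left ?_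
    rw [cyl_measure P hμ s]
    split_ifs
    · exact Finset.prod_eq_zero (Finset.mem_range.2 (by omega)) hz
    · rfl
  · have : Cyl (extw (n + 1) w) (n + 1) ∩
        {ω : ℕ → S | P (ω n) (ω (n + 1)) = 0} = ∅ := by
      ext ω
      simp only [Set.mem_inter_iff, Set.mem_setOf_eq, Set.mem_empty_iff_false,
        iff_false, not_and]
      intro hc he
      rw [hc n (by omega), hc (n + 1) le_rfl] at he
      exact hz he
    rw [this]
    exact MeasureTheory.measure_empty

lemma ae_inf_propagation :
    ∀ᵐ ω ∂ μ s, ∀ x y : S,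
      Relation.ReflTransGen (fun a b => 0 < P a b) x y →
      {n : ℕ | ω n = x}.Infinite → {n : ℕ | ω n = y}.Infinite := by
  rw [MeasureTheory.ae_all_iff]
  intro x
  rw [MeasureTheory.ae_all_iff]
  intro y
  by_cases hr : Relation.ReflTransGen (fun a b => 0 < P a b) x y
  swap
  · exact Filter.Eventually.of_forall fun ω h => absurd h hr
  by_cases hxy : x = y
  · subst hxy
    exact Filter.Eventually.of_forall fun ω _ h => h
  have goal' : ∀ᵐ ω ∂ μ s,
      {n : ℕ | ω n = x}.Infinite → {n : ℕ | ω n = y}.Infinite := by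
    obtain ⟨L, σ, h0, hL, hstep⟩ := exists_path P hr
    have hL1 : 1 ≤ L := by
      rcases Nat.eq_zero_or_pos L with h | h
      · subst h
        rw [h0] at hL
        exact absurd hL hxy
      · exact h
    have hpos : 0 < ∏ j ∈ Finset.range L, P (σ j) (σ (j + 1)) :=
      CanonicallyOrderedAdd.prod_pos.2
        fun j hj => hstep j (Finset.mem_range.1 hj)
    rw [MeasureTheory.ae_iff]
    have hsub : {ω : ℕ → S | ¬ ({n : ℕ | ω n = x}.Infinite →
        {n : ℕ | ω n = y}.Infinite)} ⊆
        ⋃ N : ℕ, {ω : ℕ → S | {n : ℕ | ω n = x}.Infinite ∧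
          ∀ m, N ≤ m → ω m ≠ y} := by
      intro ω hω
      simp only [Set.mem_setOf_eq, Classical.not_imp] at hω
      obtain ⟨hx, hy⟩ := hω
      have hfin : {n : ℕ | ω n = y}.Finite := Set.not_infinite.1 hy
      obtain ⟨b, hb⟩ := hfin.bddAbove
      refine Set.mem_iUnion.2 ⟨b + 1, hx, fun m hm hme => ?_⟩
      have := hb hme
      omega
    refine MeasureTheory.measure_mono_null hsub
      (MeasureTheory.measure_iUnion_null fun N => ?_)
    exact badN_null P hμ s x y N L σ hL1 h0 hL hpos
  exact goal'.mono fun ω h _ => h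
end AE

section Pointwise

variable {E : S → S → Prop} {ω : ℕ → S}

lemma infinite_exists_ge {T : Set ℕ} (hT : T.Infinite) (M : ℕ) :
    ∃ m, M ≤ m ∧ m ∈ T := by
  by_contra hc
  push_neg at hc
  refine hT ((Set.finite_Iio M).subset fun n hn => ?_)
  by_contra hnM
  exact hc n (by simpa using hnM) hn

lemma pointwise_iff (Acc : Finset (Set S × Set S))
    (hA : ∀ n : ℕ, E (ω n) (ω (n + 1)))
    (hB : ∀ x y : S, Relation.ReflTransGen E x y →
      {n : ℕ | ω n = x}.Infinite → {n : ℕ | ω n = y}.Infinite) :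
    ((∃ p ∈ Acc, {n | ω n ∈ p.1}.Finite ∧ {n | ω n ∈ p.2}.Infinite) ↔
      ∃ n : ℕ,
        (∀ a ∈ SCC E (ω n), ∀ b, Relation.ReflTransGen E a b → b ∈ SCC E (ω n)) ∧
        ∃ p ∈ Acc, SCC E (ω n) ∩ p.1 = ∅ ∧ (SCC E (ω n) ∩ p.2).Nonempty) := by
  classical
  set Inf : Set S := {a : S | {n : ℕ | ω n = a}.Infinite} with hInfdef
  have hreach : ∀ n m : ℕ, n ≤ m → Relation.ReflTransGen E (ω n) (ω m) := by
    intro n m hnm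
    induction m, hnm using Nat.le_induction with
    | base => exact Relation.ReflTransGen.refl
    | succ m hm ih => exact ih.tail (hA m)
  have pmut : ∀ c d : S, c ∈ Inf → d ∈ Inf → Relation.ReflTransGen E c d := by
    intro c d hc hd
    obtain ⟨n1, -, hn1⟩ := infinite_exists_ge hc 0
    obtain ⟨m, hm1, hm2⟩ := infinite_exists_ge hd n1
    rw [Set.mem_setOf_eq] at hn1 hm2
    rw [← hn1, ← hm2]
    exact hreach n1 m hm1
  have hVfin : {n : ℕ | ω n ∉ Inf}.Finite := by
    have hsub : {n : ℕ | ω n ∉ Inf} ⊆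
        ⋃ a ∈ {a : S | a ∉ Inf}, {n : ℕ | ω n = a} := by
      intro n hn
      exact Set.mem_biUnion hn rfl
    refine Set.Finite.subset (Set.Finite.biUnion (Set.toFinite _) ?_) hsub
    intro a ha
    exact Set.not_infinite.1 ha
  have heventual : ∃ N : ℕ, ∀ n, N ≤ n → ω n ∈ Inf := by
    obtain ⟨b, hb⟩ := hVfin.bddAbove
    refine ⟨b + 1, fun n hn => ?_⟩
    by_contra hc
    have := hb hc
    omega
  have hSCCInf : ∀ c ∈ Inf, SCC E c = Inf := by
    intro c hc
    ext b
    constructor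
    · rintro ⟨hcb, -⟩
      exact hB c b hcb hc
    · intro hb
      exact ⟨pmut c b hc hb, pmut b c hb hc⟩
  have hfin_of : ∀ T : Set S, Inf ∩ T = ∅ → {n : ℕ | ω n ∈ T}.Finite := by
    intro T hT
    have hsub : {n : ℕ | ω n ∈ T} ⊆ {n : ℕ | ω n ∉ Inf} := by
      intro n hn
      intro hc
      exact Set.eq_empty_iff_forall_notMem.1 hT (ω n) ⟨hc, hn⟩
    exact hVfin.subset hsub
  have hinf_of : ∀ T : Set S, (Inf ∩ T).Nonempty → {n : ℕ | ω n ∈ T}.Infinite := by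
    rintro T ⟨a, haI, haT⟩
    refine Set.Infinite.mono ?_ haI
    intro n hn
    rw [Set.mem_setOf_eq] at hn
    rw [Set.mem_setOf_eq, hn]
    exact haT
  constructor
  · rintro ⟨p, hp, hE, hF⟩
    obtain ⟨N, hN⟩ := heventual
    have hωN : ω N ∈ Inf := hN N le_rfl
    have hs := hSCCInf (ω N) hωN
    refine ⟨N, ?_, p, hp, ?_, ?_⟩
    · intro a ha b hab
      rw [hs] at ha ⊢
      exact hB a b hab ha
    · rw [hs]
      rcases Set.eq_empty_or_nonempty (Inf ∩ p.1) with h | h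
      · exact h
      · exact absurd (hinf_of p.1 h) hE.not_infinite
    · rw [hs]
      by_contra hc
      rw [Set.not_nonempty_iff_eq_empty] at hc
      exact hF (hfin_of p.2 hc)
  · rintro ⟨n, hterm, p, hp, hE0, hFne⟩
    have hωn : ω n ∈ SCC E (ω n) :=
      ⟨Relation.ReflTransGen.refl, Relation.ReflTransGen.refl⟩
    have hforward : ∀ m, n ≤ m → ω m ∈ SCC E (ω n) := fun m hm =>
      hterm _ hωn _ (hreach n m hm)
    obtain ⟨N, hN⟩ := heventual
    have haInf : ω (max n N) ∈ Inf := hN _ (le_max_right n N)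
    have haSCC : ω (max n N) ∈ SCC E (ω n) := hforward _ (le_max_left n N)
    have hIS : Inf = SCC E (ω n) := by
      ext d
      constructor
      · intro hd
        obtain ⟨m', hm'1, hm'2⟩ := infinite_exists_ge hd n
        rw [Set.mem_setOf_eq] at hm'2
        rw [← hm'2]
        exact hforward m' hm'1
      · intro hd
        exact hB _ _ (haSCC.2.trans hd.1) haInf
    exact ⟨p, hp, hfin_of p.1 (by rw [hIS]; exact hE0),
      hinf_of p.2 (by rw [hIS]; exact hFne)⟩

end Pointwise

end RabinAux

/-- almost surely, a trajectory of a finite Markov chain satisfies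
the Rabin condition `Acc` iff it reaches a terminal SCC that is accepting for
`Acc`. -/
theorem ae_rabin_iff_accepting_terminal_scc {S : Type*} [Fintype S] [Nonempty S]
    [DecidableEq S] (P : S → PMF S) (Acc : Finset (Set S × Set S)) :
    letI : MeasurableSpace S := ⊤
    ∀ μ : S → MeasureTheory.Measure (ℕ → S),
      IsTrajectoryMeasureFamily (fun a b => P a b) μ →
      ∀ s : S, ∀ᵐ ω ∂ (μ s),
        ((∃ p ∈ Acc, {n | ω n ∈ p.1}.Finite ∧ {n | ω n ∈ p.2}.Infinite) ↔
          ∃ n : ℕ,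
            (∀ a ∈ SCC (fun a b => 0 < P a b) (ω n), ∀ b,
              Relation.ReflTransGen (fun a b => 0 < P a b) a b →
                b ∈ SCC (fun a b => 0 < P a b) (ω n)) ∧
            ∃ p ∈ Acc, SCC (fun a b => 0 < P a b) (ω n) ∩ p.1 = ∅ ∧
              (SCC (fun a b => 0 < P a b) (ω n) ∩ p.2).Nonempty) := by
  intro μ hμ s
  letI : MeasurableSpace S := ⊤
  haveI : MeasurableSingletonClass S := ⟨fun _ => MeasurableSpace.measurableSet_top⟩
  filter_upwards [RabinAux.ae_edges (fun a b => P a b) hμ s,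
    RabinAux.ae_inf_propagation (fun a b => P a b) hμ s] with ω hA hB
  exact RabinAux.pointwise_iff Acc hA hB
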